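/- For odd d ≥ 3, the rational map φ_d(z) = i((z-1)/(z+1))^d satisfies τ ∘ φ_d = φ_d ∘ τ, where τ(z) = -1/conj(z). -/

import Mathlib

open OnePoint Complex Polynomial

/-- The Möbius transformation determined by the matrix `[[a,b],[c,d]]`,
acting on the Riemann sphere `OnePoint ℂ`. -/
noncomputable def moeb (a b c d : ℂ) (p : OnePoint ℂ) : OnePoint ℂ :=
  OnePoint.elim p (if c = 0 then ∞ else ((a / c : ℂ) : OnePoint ℂ))
    (fun z => if c * z + d = 0 then ∞ else (((a * z + b) / (c * z + d) : ℂ) : OnePoint ℂ))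

/-- Complex conjugation extended to the Riemann sphere. -/
noncomputable def sphConj (p : OnePoint ℂ) : OnePoint ℂ :=
  OnePoint.elim p ∞ (fun z => ((starRingEnd ℂ) z : OnePoint ℂ))

/-- The imaginary reflection `τ(z) = -1/conj z` on the Riemann sphere. -/
noncomputable def tauSph (p : OnePoint ℂ) : OnePoint ℂ :=
  moeb 0 (-1) 1 0 (sphConj p)

/-- The rational map on the Riemann sphere determined by a quotient `P/Q`
of (coprime) polynomials. -/
noncomputable def ratMap (P Q : Polynomial ℂ) (p : OnePoint ℂ) : OnePoint ℂ :=
  OnePoint.elim p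
    (if Q.degree < P.degree then ∞
     else ((P.coeff Q.natDegree / Q.leadingCoeff : ℂ) : OnePoint ℂ))
    (fun z => if Q.eval z = 0 then ∞ else ((P.eval z / Q.eval z : ℂ) : OnePoint ℂ))

lemma tauSph_infty : tauSph ∞ = ((0:ℂ) : OnePoint ℂ) := by
  simp [tauSph, sphConj, moeb]

lemma tauSph_coe (x : ℂ) :
    tauSph (x : OnePoint ℂ) =
      if x = 0 then ∞ else (((-1) / (starRingEnd ℂ) x : ℂ) : OnePoint ℂ) := by
  simp [tauSph, sphConj, moeb, _root_.map_eq_zero]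

lemma ratMap_coe (P Q : Polynomial ℂ) (z : ℂ) :
    ratMap P Q (z : OnePoint ℂ) =
      if Q.eval z = 0 then ∞ else ((P.eval z / Q.eval z : ℂ) : OnePoint ℂ) := rfl

/-- for odd `d ≥ 3`, Silverman's map `φ_d(z) = i((z-1)/(z+1))^d`
commutes with the imaginary reflection `τ(z) = -1/conj z`. -/
theorem silverman_commutes_with_tau (d : ℕ) (hd : 3 ≤ d) (hodd : Odd d) :
    ∀ p, tauSph (ratMap (C Complex.I * (X - 1) ^ d) ((X + 1) ^ d) p)
        = ratMap (C Complex.I * (X - 1) ^ d) ((X + 1) ^ d) (tauSph p) := by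
  set P : Polynomial ℂ := C Complex.I * (X - 1) ^ d with hP
  set Q : Polynomial ℂ := (X + 1) ^ d with hQ
  have hQmonic : Q.Monic := (monic_X_add_C (1:ℂ)).pow d
  have h1 : (X + 1 : Polynomial ℂ).degree = 1 := by simpa using degree_X_add_C (1:ℂ)
  have hQdeg : Q.degree = d := by rw [hQ, degree_pow, h1]; simp
  have hQnat : Q.natDegree = d := natDegree_eq_of_degree_eq_some hQdeg
  have hX1 : (X - 1 : Polynomial ℂ) = X - C 1 := by simp
  have hPdeg : P.degree = d := by
    rw [hP, degree_C_mul Complex.I_ne_zero, degree_pow, hX1, degree_X_sub_C]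
    simp
  have hm : ((X - 1 : Polynomial ℂ) ^ d).Monic := hX1 ▸ (monic_X_sub_C (1:ℂ)).pow d
  have hnd : ((X - 1 : Polynomial ℂ) ^ d).natDegree = d := by
    simp [hX1, natDegree_pow]
  have hPcoeff : P.coeff d = Complex.I := by
    have h2 := hm.coeff_natDegree
    rw [hnd] at h2
    rw [hP, coeff_C_mul, h2, mul_one]
  have hPe : ∀ z : ℂ, P.eval z = Complex.I * (z - 1) ^ d := by intro z; simp [hP]
  have hQe : ∀ z : ℂ, Q.eval z = (z + 1) ^ d := by intro z; simp [hQ]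
  have hdz : d ≠ 0 := by omega
  have hinf : ratMap P Q ∞ = ((Complex.I : ℂ) : OnePoint ℂ) := by
    show OnePoint.elim ∞ _ _ = _
    rw [elim_infty, if_neg (by rw [hPdeg, hQdeg]; exact lt_irrefl _),
      hQnat, hPcoeff, hQmonic.leadingCoeff, div_one]
  intro p
  induction p using OnePoint.rec with
  | infty =>
    rw [hinf, tauSph_infty, tauSph_coe, if_neg Complex.I_ne_zero, ratMap_coe,
      if_neg (by rw [hQe]; simp), hPe, hQe, OnePoint.coe_eq_coe]
    rw [Complex.conj_I]
    have : ((0:ℂ) - 1) ^ d = -1 := by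
      rw [zero_sub, hodd.neg_one_pow]
    rw [this]
    norm_num
  | coe z =>
    rw [tauSph_coe]
    by_cases hz0 : z = 0
    · subst hz0
      rw [if_pos rfl, hinf, ratMap_coe,
        if_neg (by rw [hQe]; simp),
        tauSph_coe,
        if_neg (by
          rw [hPe, hQe]
          simp only [zero_sub, hodd.neg_one_pow, zero_add, one_pow, div_one, mul_neg_one]
          exact neg_ne_zero.mpr Complex.I_ne_zero),
        hPe, hQe, OnePoint.coe_eq_coe]
      rw [zero_sub, hodd.neg_one_pow, zero_add, one_pow, div_one, mul_neg_one,
        map_neg, Complex.conj_I, neg_neg, div_I]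
      ring
    · rw [if_neg hz0]
      by_cases hz1 : z = -1
      · subst hz1
        rw [ratMap_coe, if_pos (by rw [hQe]; simp [hdz]), tauSph_infty, ratMap_coe]
        have h2 : (starRingEnd ℂ) (-1 : ℂ) = -1 := by simp
        rw [h2]
        norm_num
        rw [if_neg (by rw [hQe]; exact pow_ne_zero _ (by norm_num)), hPe]
        simp [hdz]
      · have hQz : Q.eval z ≠ 0 := by
          rw [hQe]
          exact pow_ne_zero _ (fun h => hz1 (by linear_combination h))
        rw [ratMap_coe, if_neg hQz]
        by_cases hzz1 : z = 1
        · subst hzz1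
          rw [tauSph_coe, if_pos (by rw [hPe]; simp [hdz])]
          rw [ratMap_coe, if_pos]
          have h2 : (starRingEnd ℂ) (1 : ℂ) = 1 := by simp
          rw [h2, hQe]
          norm_num [hdz]
        · have hz1' : z - 1 ≠ 0 := sub_ne_zero.mpr hzz1
          have hzm1' : z + 1 ≠ 0 := fun h => hz1 (by linear_combination h)
          have hPz : P.eval z ≠ 0 := by
            rw [hPe]
            exact mul_ne_zero Complex.I_ne_zero (pow_ne_zero _ hz1')
          have hval : P.eval z / Q.eval z ≠ 0 := div_ne_zero hPz hQz
          rw [tauSph_coe, if_neg hval]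
          set c := (starRingEnd ℂ) z with hc
          have hc0 : c ≠ 0 := by
            rw [hc]; intro h; exact hz0 (by simpa using congrArg (starRingEnd ℂ) h)
          have hc1 : c ≠ 1 := by
            rw [hc]; intro h; exact hzz1 (by simpa using congrArg (starRingEnd ℂ) h)
          have hcm1 : c ≠ -1 := by
            rw [hc]; intro h; exact hz1 (by simpa using congrArg (starRingEnd ℂ) h)
          have hw : (-1 / c + 1) ≠ 0 := by
            intro h
            apply hc1
            field_simp at h
            linear_combination h
          rw [ratMap_coe, if_neg (by rw [hQe]; exact pow_ne_zero _ hw),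
            hPe, hQe, hPe, hQe, OnePoint.coe_eq_coe]
          -- complex identity
          rw [map_div₀, map_mul, map_pow, map_sub, map_pow, map_add, map_one,
            Complex.conj_I, ← hc]
          have hkey : (-1 / c - 1) ^ d = -((c + 1) ^ d / c ^ d) := by
            rw [show (-1 / c - 1 : ℂ) = -((c + 1) / c) by field_simp; ring,
              hodd.neg_pow, div_pow]
          rw [hkey]
          have hc1' : c - 1 ≠ 0 := sub_ne_zero.mpr hc1
          field_simp
          ring_nf
          rw [Complex.I_sq]
          ring_nf
          rw [← mul_pow, mul_inv_cancel₀ hc0]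
          have h3 : (1 - c⁻¹) * c = -1 + c := by rw [sub_mul, inv_mul_cancel₀ hc0]; ring
          have h4 : (1 - c⁻¹) ≠ 0 := fun h => hc1 (by rw [h, zero_mul] at h3; linear_combination -h3)
          rw [← mul_pow, ← mul_pow, ← h3, inv_mul_cancel_left₀ h4]
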